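/- Let A, B be bounded positive operators on a complex Hilbert space H. Then ⟨A ξ, ξ⟩ ≤ ⟨B² ξ, ξ⟩^{1/2} for all unit vectors ξ if and only if A ≤ (1/(2t)) B² + (t/2)·I for every positive real number t. -/

import Mathlib

open scoped InnerProductSpace

variable {H : Type*} [NormedAddCommGroup H] [InnerProductSpace ℂ H] [CompleteSpace H]

omit [CompleteSpace H] in
private lemma smul_quad (T : H →L[ℂ] H) (c : ℝ) (ξ : H) :
    RCLike.re ⟪T (c • ξ), c • ξ⟫_ℂ = c ^ 2 * RCLike.re ⟪T ξ, ξ⟫_ℂ := by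
  rw [RCLike.real_smul_eq_coe_smul (K := ℂ), map_smul, inner_smul_left, inner_smul_right]
  simp [RCLike.conj_ofReal, Complex.mul_re, Complex.ofReal_re, Complex.ofReal_im]
  ring

private lemma bsq_eq (B : H →L[ℂ] H) (hB : 0 ≤ B) (ξ : H) :
    RCLike.re ⟪(B ^ 2) ξ, ξ⟫_ℂ = ‖B ξ‖ ^ 2 := by
  have hsa := ((ContinuousLinearMap.nonneg_iff_isPositive B).mp hB).isSelfAdjoint
  have h2 : (B ^ 2) ξ = B (B ξ) := by simp [pow_two]
  rw [h2]
  conv_lhs => rw [← hsa.adjoint_eq]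
  rw [ContinuousLinearMap.adjoint_inner_left, hsa.adjoint_eq]
  exact inner_self_eq_norm_sq _

omit [CompleteSpace H] in
private lemma quad_id (t : ℝ) (B A : H →L[ℂ] H) (ξ : H) :
    RCLike.re ⟪((1 / (2 * t)) • B ^ 2 + (t / 2) • (1 : H →L[ℂ] H) - A) ξ, ξ⟫_ℂ
      = (1 / (2 * t)) * RCLike.re ⟪(B ^ 2) ξ, ξ⟫_ℂ + (t / 2) * ‖ξ‖ ^ 2
        - RCLike.re ⟪A ξ, ξ⟫_ℂ := by
  simp [inner_sub_left, inner_add_left, RCLike.real_smul_eq_coe_smul (K := ℂ), inner_smul_left,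
    RCLike.conj_ofReal, inner_self_eq_norm_sq, map_ofNat, Complex.mul_re, Complex.ofReal_re,
    Complex.ofReal_im, inner_self_im]
  rw [← Complex.ofReal_pow, Complex.ofReal_re]; ring

private lemma amgm_aux {r x t : ℝ} (ht : 0 < t) (hx0 : 0 ≤ x) (hr : 0 ≤ r) :
    r * Real.sqrt x ≤ 1 / (2 * t) * x + t / 2 * r ^ 2 := by
  have hsx : Real.sqrt x ^ 2 = x := Real.sq_sqrt hx0
  have key : 2 * t * (r * Real.sqrt x) ≤ x + t ^ 2 * r ^ 2 := by
    nlinarith [sq_nonneg (Real.sqrt x - t * r)]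
  have h2 : r * Real.sqrt x ≤ (x + t ^ 2 * r ^ 2) / (2 * t) :=
    (le_div_iff₀ (by positivity)).mpr (by linarith [key])
  have h3 : (x + t ^ 2 * r ^ 2) / (2 * t) = 1 / (2 * t) * x + t / 2 * r ^ 2 := by
    field_simp
  linarith [h2, h3 ▸ h2]

private lemma sqrt_aux {a x : ℝ} (hx0 : 0 ≤ x)
    (key : ∀ t : ℝ, 0 < t → a ≤ 1 / (2 * t) * x + t / 2) : a ≤ Real.sqrt x := by
  rcases hx0.eq_or_lt with hxe | hxp
  · rw [← hxe, Real.sqrt_zero]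
    by_contra h'
    push_neg at h'
    have := key a h'
    rw [← hxe] at this
    norm_num at this
    linarith
  · have hs : 0 < Real.sqrt x := Real.sqrt_pos.mpr hxp
    have hsx : Real.sqrt x * Real.sqrt x = x := Real.mul_self_sqrt hx0
    have h1 := key (Real.sqrt x) hs
    have hdiv : 1 / (2 * Real.sqrt x) * x = Real.sqrt x / 2 := by
      field_simp; linarith [hsx]
    linarith [h1, hdiv ▸ h1]

theorem stmt1 (A B : H →L[ℂ] H) (hA : 0 ≤ A) (hB : 0 ≤ B) :
    (∀ ξ : H, ‖ξ‖ = 1 →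
        RCLike.re ⟪A ξ, ξ⟫_ℂ ≤ Real.sqrt (RCLike.re ⟪(B ^ 2) ξ, ξ⟫_ℂ)) ↔
      ∀ t : ℝ, 0 < t → A ≤ (1 / (2 * t)) • B ^ 2 + (t / 2) • (1 : H →L[ℂ] H) := by
  have hAsa := ((ContinuousLinearMap.nonneg_iff_isPositive A).mp hA).isSelfAdjoint
  have hBsa := ((ContinuousLinearMap.nonneg_iff_isPositive B).mp hB).isSelfAdjoint
  constructor
  · intro h t ht
    have hall : ∀ ξ : H, RCLike.re ⟪A ξ, ξ⟫_ℂ ≤ ‖ξ‖ * Real.sqrt (RCLike.re ⟪(B ^ 2) ξ, ξ⟫_ℂ) := by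
      intro ξ
      rcases eq_or_ne ξ 0 with rfl | hξ
      · simp
      · have hr : (0 : ℝ) < ‖ξ‖ := norm_pos_iff.mpr hξ
        have hu : ‖(‖ξ‖⁻¹ • ξ : H)‖ = 1 := by
          simp [norm_smul, abs_of_pos (inv_pos.mpr hr), inv_mul_cancel₀ hr.ne']
        have h1 := h _ hu
        rw [smul_quad A, smul_quad (B ^ 2)] at h1
        have hsq : Real.sqrt (‖ξ‖⁻¹ ^ 2 * RCLike.re ⟪(B ^ 2) ξ, ξ⟫_ℂ)
            = ‖ξ‖⁻¹ * Real.sqrt (RCLike.re ⟪(B ^ 2) ξ, ξ⟫_ℂ) := by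
          rw [Real.sqrt_mul (by positivity), Real.sqrt_sq (by positivity)]
        rw [hsq] at h1
        have h2 := mul_le_mul_of_nonneg_left h1 (le_of_lt (by positivity : (0:ℝ) < ‖ξ‖ ^ 2))
        calc RCLike.re ⟪A ξ, ξ⟫_ℂ
            = ‖ξ‖ ^ 2 * (‖ξ‖⁻¹ ^ 2 * RCLike.re ⟪A ξ, ξ⟫_ℂ) := by field_simp
          _ ≤ ‖ξ‖ ^ 2 * (‖ξ‖⁻¹ * Real.sqrt (RCLike.re ⟪(B ^ 2) ξ, ξ⟫_ℂ)) := h2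
          _ = ‖ξ‖ * Real.sqrt (RCLike.re ⟪(B ^ 2) ξ, ξ⟫_ℂ) := by field_simp
    rw [ContinuousLinearMap.le_def]
    constructor
    · exact ((IsSelfAdjoint.smul (R := ℝ) (star_trivial _) (hBsa.pow 2)).add
        (IsSelfAdjoint.smul (R := ℝ) (star_trivial _) (IsSelfAdjoint.one _))).sub hAsa |>.isSymmetric
    · intro ξ
      rw [ContinuousLinearMap.reApplyInnerSelf, quad_id t B A ξ]
      have hx0 : 0 ≤ RCLike.re ⟪(B ^ 2) ξ, ξ⟫_ℂ := by rw [bsq_eq B hB]; positivity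
      have h4 := amgm_aux (r := ‖ξ‖) ht hx0 (norm_nonneg ξ)
      linarith [hall ξ, h4]
  · intro h ξ hξ
    have hx0 : 0 ≤ RCLike.re ⟪(B ^ 2) ξ, ξ⟫_ℂ := by rw [bsq_eq B hB]; positivity
    refine sqrt_aux hx0 fun t ht => ?_
    have h5 := (h t ht).2 ξ
    rw [ContinuousLinearMap.reApplyInnerSelf, quad_id t B A ξ, hξ] at h5
    rw [one_pow, mul_one] at h5
    linarith
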